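/- Let G be a group, H ≤ G a subgroup of finite index. If membership in every rational subset of G is decidable, then membership in every rational subset of H is decidable; conversely, if membership in every rational subset of H is decidable then the same holds for G. (Decidability of rational subset membership is a virtual property.) -/

import Mathlib

set_option linter.unusedSectionVars false
set_option maxHeartbeats 1000000

namespace Stmt13Aux

example (l l' : List ℕ) (f : ℕ → List ℕ) : (l ++ l').flatMap f = l.flatMap f ++ l'.flatMap f :=
  List.flatMap_append ..


/-- Transport an NFA along an equivalence of state types. -/
def mapNFA {α : Type*} {σ : Type*} {τ : Type*} (M : NFA α σ) (e : σ ≃ τ) : NFA α τ where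
  step q a := e '' M.step (e.symm q) a
  start := e '' M.start
  accept := e '' M.accept

theorem mapNFA_stepSet {α σ τ : Type*} (M : NFA α σ) (e : σ ≃ τ) (S : Set σ) (a : α) :
    (mapNFA M e).stepSet (e '' S) a = e '' M.stepSet S a := by
  ext q
  simp only [NFA.mem_stepSet, mapNFA, Set.mem_image]
  constructor
  · rintro ⟨t, ⟨s, hs, rfl⟩, ⟨s', hs', rfl⟩⟩
    exact ⟨s', ⟨s, hs, by simpa using hs'⟩, rfl⟩
  · rintro ⟨s', ⟨s, hs, hs'⟩, rfl⟩
    exact ⟨e s, ⟨s, hs, rfl⟩, ⟨s', by simpa using hs', rfl⟩⟩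

theorem mapNFA_evalFrom {α σ τ : Type*} (M : NFA α σ) (e : σ ≃ τ) (S : Set σ) (v : List α) :
    (mapNFA M e).evalFrom (e '' S) v = e '' M.evalFrom S v := by
  induction v generalizing S with
  | nil => rfl
  | cons a v ih =>
      show (mapNFA M e).evalFrom ((mapNFA M e).stepSet (e '' S) a) v = _
      rw [mapNFA_stepSet]
      exact ih _

theorem mapNFA_accepts {α σ τ : Type*} (M : NFA α σ) (e : σ ≃ τ) :
    (mapNFA M e).accepts = M.accepts := by
  ext v
  simp only [NFA.mem_accepts]
  show (∃ q ∈ (mapNFA M e).accept, q ∈ (mapNFA M e).evalFrom (mapNFA M e).start v) ↔ _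
  have : (mapNFA M e).start = e '' M.start := rfl
  rw [this, mapNFA_evalFrom]
  constructor
  · rintro ⟨q, ⟨s, hs, rfl⟩, ⟨s', hs', h⟩⟩
    exact ⟨s', by rw [e.injective h]; exact hs, hs'⟩
  · rintro ⟨s, hs, hs'⟩
    exact ⟨e s, ⟨s, hs, rfl⟩, ⟨s, hs', rfl⟩⟩

/-- Any NFA with finite states is equivalent to one with states in `Type 0`. -/
theorem exists_fin_nfa {α : Type*} {σ : Type*} [Fintype σ] (M : NFA α σ) :
    ∃ (τ : Type) (_ : Fintype τ) (N : NFA α τ), N.accepts = M.accepts :=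
  ⟨Fin (Fintype.card σ), inferInstance, mapNFA M (Fintype.equivFin σ),
    mapNFA_accepts M (Fintype.equivFin σ)⟩



section Subst

variable {C D σ : Type*} [Fintype C] [Fintype σ] (M : NFA C σ) (d : C → List D)

/-- Epsilon moves: transitions of `M` whose label maps to the empty word. -/
def er (s s' : σ) : Prop := ∃ x, d x = [] ∧ s' ∈ M.step s x

/-- Reflexive-transitive closure of epsilon moves. -/
def EC : σ → σ → Prop := Relation.ReflTransGen (er M d)

/-- Bound on the lengths of the substituted words. -/
noncomputable def KB : ℕ := Finset.univ.sup fun x : C => (d x).length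

lemma length_le_KB (x : C) : (d x).length ≤ KB d := by
  exact Finset.le_sup (f := fun x : C => (d x).length) (Finset.mem_univ x)

/-- Partial progress through reading the word `d x`, heading to state `s'`, having read
`j` letters so far; reading `a` next. -/
def move (s' : σ) (x : C) (j : ℕ) (a : D) : Set (σ ⊕ σ × C × Fin (KB d + 1)) :=
  { q | (d x)[j]? = some a ∧
      ((j + 1 = (d x).length ∧ q = Sum.inl s') ∨
       (∃ m : Fin (KB d + 1), (m : ℕ) = j + 1 ∧ j + 1 < (d x).length ∧ q = Sum.inr (s', x, m))) }

/-- The substitution NFA: accepts exactly the words `u.flatMap d` for `u` accepted by `M`. -/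
noncomputable def substNFA : NFA D (σ ⊕ σ × C × Fin (KB d + 1)) where
  step q a :=
    match q with
    | Sum.inl s => { p | ∃ s₁, EC M d s s₁ ∧ ∃ x s', s' ∈ M.step s₁ x ∧ p ∈ move d s' x 0 a }
    | Sum.inr (s', x, k) => move d s' x (k : ℕ) a
  start := Sum.inl '' M.start
  accept := { q | ∃ s s₂, q = Sum.inl s ∧ EC M d s s₂ ∧ s₂ ∈ M.accept }

lemma EClem {s₁ s : σ} (h : EC M d s₁ s) {S : Set σ} {u : List C} (hu : s₁ ∈ M.evalFrom S u) :
    ∃ u₂, u₂.flatMap d = u.flatMap d ∧ s ∈ M.evalFrom S u₂ := by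
  induction h with
  | refl => exact ⟨u, rfl, hu⟩
  | tail _ hst ih =>
      obtain ⟨u₂, hbind, hmem⟩ := ih
      obtain ⟨x, hx, hstep⟩ := hst
      refine ⟨u₂ ++ [x], ?_, ?_⟩
      · rw [List.flatMap_append, hbind]; simp [hx]
      · rw [M.evalFrom_append, NFA.evalFrom_singleton]
        exact (M.mem_stepSet).2 ⟨_, hmem, hstep⟩

lemma chain (s' : σ) (x : C) :
    ∀ (rest : List D) (j : ℕ), (d x).drop j = rest → j < (d x).length →
    ∀ P : Set (σ ⊕ σ × C × Fin (KB d + 1)),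
      (∃ p ∈ P, ∀ a, move d s' x j a ⊆ (substNFA M d).step p a) →
      Sum.inl s' ∈ (substNFA M d).evalFrom P rest := by
  intro rest
  induction rest with
  | nil =>
      intro j hdrop hj P _
      exact absurd (List.drop_eq_nil_iff.1 hdrop) (by omega)
  | cons a rest' ih =>
      intro j hdrop hj P hP
      obtain ⟨p, hp, hsub⟩ := hP
      have hdg := List.drop_eq_getElem_cons hj
      rw [hdrop] at hdg
      have ha : (d x)[j] = a := (List.cons.injEq _ _ _ _ ▸ hdg).1.symm
      have hrest' : (d x).drop (j + 1) = rest' := ((List.cons.injEq _ _ _ _ ▸ hdg).2).symm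
      have hget : (d x)[j]? = some a := by
        rw [List.getElem?_eq_getElem hj, ha]
      show Sum.inl s' ∈ (substNFA M d).evalFrom ((substNFA M d).stepSet P a) rest'
      rcases Nat.lt_or_ge (j + 1) (d x).length with h2 | h1
      · -- not yet done: go to intermediate state
        have hm : j + 1 < KB d + 1 := by
          have := length_le_KB d x; omega
        set m : Fin (KB d + 1) := ⟨j + 1, hm⟩ with hmdef
        have hqmem : Sum.inr (s', x, m) ∈ move d s' x j a :=
          ⟨hget, Or.inr ⟨m, rfl, h2, rfl⟩⟩
        have hq : (Sum.inr (s', x, m) : σ ⊕ σ × C × Fin (KB d + 1)) ∈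
            (substNFA M d).stepSet P a :=
          ((substNFA M d).mem_stepSet).2 ⟨p, hp, hsub a hqmem⟩
        exact ih (j + 1) hrest' h2 _ ⟨Sum.inr (s', x, m), hq, fun a' => by
          show move d s' x (m : ℕ) a' ⊆ _
          exact subset_rfl⟩
      · -- j + 1 = length: finish
        have h1' : j + 1 = (d x).length := by omega
        have hrest : rest' = [] := by
          rw [← hrest', h1', List.drop_length]
        subst hrest
        have hqmem : (Sum.inl s' : σ ⊕ σ × C × Fin (KB d + 1)) ∈ move d s' x j a :=
          ⟨hget, Or.inl ⟨h1', rfl⟩⟩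
        exact ((substNFA M d).mem_stepSet).2 ⟨p, hp, hsub a hqmem⟩

lemma fwd : ∀ (u : List C) (S : Set σ) (P : Set (σ ⊕ σ × C × Fin (KB d + 1))),
    (∀ s ∈ S, ∃ s₀, EC M d s₀ s ∧ Sum.inl s₀ ∈ P) →
    ∀ s' ∈ M.evalFrom S u,
    ∃ s₁, EC M d s₁ s' ∧ Sum.inl s₁ ∈ (substNFA M d).evalFrom P (u.flatMap d) := by
  intro u
  induction u with
  | nil =>
      intro S P hSP s' hs'
      simpa using hSP s' hs'
  | cons x u' ih =>
      intro S P hSP s' hs'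
      have heq : ((x :: u').flatMap d) = d x ++ u'.flatMap d := by simp
      rw [heq]
      have hev : (substNFA M d).evalFrom P (d x ++ u'.flatMap d) =
          (substNFA M d).evalFrom ((substNFA M d).evalFrom P (d x)) (u'.flatMap d) := by
        simp [NFA.evalFrom, List.foldl_append]
      rw [hev]
      refine ih (M.stepSet S x) _ ?_ s' hs'
      intro s hs
      obtain ⟨t, ht, hstep⟩ := (M.mem_stepSet).1 hs
      obtain ⟨t₀, hec, hP⟩ := hSP t ht
      rcases eq_or_ne (d x) [] with hdx | hdx
      · refine ⟨t₀, hec.tail ⟨x, hdx, hstep⟩, ?_⟩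
        rw [hdx]
        exact hP
      · refine ⟨s, Relation.ReflTransGen.refl, ?_⟩
        refine chain M d s x (d x) 0 rfl (List.length_pos_iff.2 hdx) P ⟨Sum.inl t₀, hP, ?_⟩
        intro a q hq
        exact ⟨t, hec, x, s, hstep, hq⟩

lemma bwd : ∀ (v : List D) (q : σ ⊕ σ × C × Fin (KB d + 1)),
    q ∈ (substNFA M d).evalFrom (Sum.inl '' M.start) v →
    (∀ s', q = Sum.inl s' → ∃ u, u.flatMap d = v ∧ s' ∈ M.evalFrom M.start u) ∧
    (∀ s' x (k : Fin (KB d + 1)), q = Sum.inr (s', x, k) →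
      ∃ u s, u.flatMap d ++ (d x).take (k : ℕ) = v ∧ 0 < (k : ℕ) ∧ (k : ℕ) < (d x).length ∧
        s ∈ M.evalFrom M.start u ∧ s' ∈ M.step s x) := by
  intro v
  induction v using List.reverseRecOn with
  | nil =>
      intro q hq
      constructor
      · rintro s' rfl
        obtain ⟨s, hs, hss⟩ := hq
        cases hss
        exact ⟨[], rfl, hs⟩
      · rintro s' x k rfl
        obtain ⟨s, _, hss⟩ := hq
        cases hss
  | append_singleton v a ih =>
      intro q hq
      rw [(substNFA M d).evalFrom_append, NFA.evalFrom_singleton] at hq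
      obtain ⟨p, hp, hstep⟩ := ((substNFA M d).mem_stepSet).1 hq
      match p with
      | Sum.inl s₀ =>
          obtain ⟨u₀, hu₀, hs₀⟩ := (ih _ hp).1 s₀ rfl
          obtain ⟨s₁, hec, x, s'', hstep', hmove⟩ := hstep
          obtain ⟨u₁, hu₁, hs₁⟩ := EClem M d hec hs₀
          obtain ⟨hget, hcase⟩ := hmove
          constructor
          · rintro s' rfl
            rcases hcase with ⟨hlen, hq'⟩ | ⟨m, _, _, hq'⟩
            · cases hq'
              have hdx : d x = [a] := by
                have h0 : (d x)[0]? = some a := hget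
                have hl1 : (d x).length = 1 := by omega
                obtain ⟨b, hb⟩ := List.length_eq_one_iff.1 hl1
                rw [hb] at h0 ⊢
                simpa using h0
              refine ⟨u₁ ++ [x], ?_, ?_⟩
              · rw [List.flatMap_append, hu₁, hu₀]
                simp [hdx]
              · rw [M.evalFrom_append, NFA.evalFrom_singleton]
                exact (M.mem_stepSet).2 ⟨s₁, hs₁, hstep'⟩
            · cases hq'
          · rintro s₃ x₃ k rfl
            rcases hcase with ⟨_, hq'⟩ | ⟨m, hm, hmlen, hq'⟩
            · cases hq'
            · simp only [Sum.inr.injEq, Prod.mk.injEq] at hq'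
              obtain ⟨rfl, rfl, rfl⟩ := hq'
              refine ⟨u₁, s₁, ?_, by omega, by omega, hs₁, hstep'⟩
              rw [hu₁, hu₀]
              congr 1
              have hk1 : (k : ℕ) = 1 := by omega
              rw [hk1, List.take_succ, List.take_zero]
              simp [hget]
      | Sum.inr (s'', x, k0) =>
          obtain ⟨u, s, hv, hk0pos, hk0len, hsM, hstepM⟩ := (ih _ hp).2 s'' x k0 rfl
          obtain ⟨hget, hcase⟩ := hstep
          have htake : (d x).take ((k0 : ℕ) + 1) = (d x).take (k0 : ℕ) ++ [a] := by
            rw [List.take_succ]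
            simp [hget]
          constructor
          · rintro s' rfl
            rcases hcase with ⟨hlen, hq'⟩ | ⟨m, _, _, hq'⟩
            · cases hq'
              refine ⟨u ++ [x], ?_, ?_⟩
              · rw [List.flatMap_append]
                simp only [List.flatMap_cons, List.flatMap_nil, List.append_nil]
                rw [← hv, List.append_assoc, ← htake, hlen, List.take_length]
              · rw [M.evalFrom_append, NFA.evalFrom_singleton]
                exact (M.mem_stepSet).2 ⟨s, hsM, hstepM⟩
            · cases hq'
          · rintro s₃ x₃ k rfl
            rcases hcase with ⟨_, hq'⟩ | ⟨m, hm, hmlen, hq'⟩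
            · cases hq'
            · simp only [Sum.inr.injEq, Prod.mk.injEq] at hq'
              obtain ⟨rfl, rfl, rfl⟩ := hq'
              refine ⟨u, s, ?_, by omega, by omega, hsM, hstepM⟩
              rw [← hv, List.append_assoc]
              congr 1
              have hk' : (k : ℕ) = (k0 : ℕ) + 1 := by omega
              rw [hk', htake]

theorem substNFA_accepts :
    (substNFA M d).accepts = { v | ∃ u ∈ M.accepts, v = u.flatMap d } := by
  ext v
  constructor
  · rintro ⟨q, ⟨s, s₂, rfl, hec, hacc⟩, heval⟩
    obtain ⟨u, hu, hsu⟩ := (bwd M d v _ heval).1 s rfl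
    obtain ⟨u₂, hu₂, hs₂⟩ := EClem M d hec hsu
    exact ⟨u₂, ⟨s₂, hacc, hs₂⟩, by rw [hu₂, hu]⟩
  · rintro ⟨u, ⟨s', hacc, heval⟩, rfl⟩
    obtain ⟨s₁, hec, hmem⟩ := fwd M d u M.start (Sum.inl '' M.start)
      (fun s hs => ⟨s, Relation.ReflTransGen.refl, ⟨s, hs, rfl⟩⟩) s' heval
    exact ⟨Sum.inl s₁, ⟨s₁, s', rfl, hec, hacc⟩, hmem⟩

end Subst




section Ann

variable {α σ Q : Type*} (act : Q → α → Q)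

/-- Annotate a word with the intermediate values of a fold. -/
def ann : Q → List α → List (Q × α)
  | _, [] => []
  | c, a :: u => (c, a) :: ann (act c a) u

lemma ann_append (c : Q) (u : List α) (a : α) :
    ann act c (u ++ [a]) = ann act c u ++ [(List.foldl act c u, a)] := by
  induction u generalizing c with
  | nil => rfl
  | cons b u ih => simp [ann, ih]

/-- The product automaton tracking the fold value along with the run, over the annotated
alphabet, accepting only at fold value `t`. -/
def annNFA (M : NFA α σ) (c0 t : Q) : NFA (Q × α) (σ × Q) where
  step p x := { p' | x.1 = p.2 ∧ p'.1 ∈ M.step p.1 x.2 ∧ p'.2 = act p.2 x.2 }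
  start := { p | p.1 ∈ M.start ∧ p.2 = c0 }
  accept := { p | p.1 ∈ M.accept ∧ p.2 = t }

lemma annNFA_eval (M : NFA α σ) (c0 t : Q) (v : List (Q × α)) (s : σ) (c : Q) :
    (s, c) ∈ (annNFA act M c0 t).evalFrom (annNFA act M c0 t).start v ↔
      ∃ u, v = ann act c0 u ∧ s ∈ M.evalFrom M.start u ∧ c = List.foldl act c0 u := by
  induction v using List.reverseRecOn generalizing s c with
  | nil =>
      constructor
      · rintro ⟨hs, hc⟩
        exact ⟨[], rfl, hs, hc⟩
      · rintro ⟨u, hu, hs, hc⟩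
        match u with
        | [] => exact ⟨hs, hc⟩
        | a :: u' => simp [ann] at hu
  | append_singleton v x ih =>
      rw [(annNFA act M c0 t).evalFrom_append, NFA.evalFrom_singleton]
      constructor
      · intro h
        obtain ⟨p, hp, hstep⟩ := ((annNFA act M c0 t).mem_stepSet).1 h
        obtain ⟨s₁, c₁⟩ := p
        obtain ⟨hx1, hsstep, hc⟩ := hstep
        dsimp only at hx1 hsstep hc
        obtain ⟨u, hv, hs₁, hc₁⟩ := (ih s₁ c₁).1 hp
        refine ⟨u ++ [x.2], ?_, ?_, ?_⟩
        · rw [ann_append, hv]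
          congr 2
          rw [← hc₁, ← hx1]
        · rw [M.evalFrom_append, NFA.evalFrom_singleton]
          exact (M.mem_stepSet).2 ⟨s₁, hs₁, hsstep⟩
        · rw [List.foldl_append, List.foldl_cons, List.foldl_nil, ← hc₁, ← hx1, hc, hx1]
      · rintro ⟨u, hu, hs, hc⟩
        rcases u.eq_nil_or_concat with rfl | ⟨u', a, rfl⟩
        · simp [ann] at hu
        · rw [List.concat_eq_append] at hu hs hc
          rw [ann_append] at hu
          have hlast := List.append_inj' hu rfl
          obtain ⟨hv, hx⟩ := hlast
          have hx' : x = (List.foldl act c0 u', a) := by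
            have := List.cons.injEq x [] (List.foldl act c0 u', a) [] ▸ hx
            simpa using hx
          rw [M.evalFrom_append, NFA.evalFrom_singleton] at hs
          obtain ⟨s₁, hs₁, hstep⟩ := (M.mem_stepSet).1 hs
          refine ((annNFA act M c0 t).mem_stepSet).2
            ⟨(s₁, List.foldl act c0 u'), (ih s₁ _).2 ⟨u', hv, hs₁, rfl⟩, ?_, ?_, ?_⟩
          · rw [hx']
          · rw [hx']
            exact hstep
          · rw [hx', hc, List.foldl_append, List.foldl_cons, List.foldl_nil]
  
lemma annNFA_accepts (M : NFA α σ) (c0 t : Q) :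
    (annNFA act M c0 t).accepts =
      { v | ∃ u ∈ M.accepts, List.foldl act c0 u = t ∧ v = ann act c0 u } := by
  ext v
  constructor
  · rintro ⟨⟨s, c⟩, ⟨hacc, hct⟩, heval⟩
    dsimp only at hacc hct
    subst hct
    obtain ⟨u, hv, hs, hc⟩ := (annNFA_eval act M c0 c v s c).1 heval
    exact ⟨u, ⟨s, hacc, hs⟩, hc.symm, hv⟩
  · rintro ⟨u, ⟨s, hacc, hs⟩, ht, rfl⟩
    exact ⟨(s, t), ⟨hacc, rfl⟩, (annNFA_eval act M c0 t _ s t).2 ⟨u, rfl, hs, ht.symm⟩⟩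

end Ann


section Main

variable {G : Type*} [Group G] {A B : Type*}
    [Fintype A] [Primcodable A] [Fintype B] [Primcodable B]

lemma computable_fin_cases {β : Type*} [Primcodable β] {n : ℕ} (f : Fin n → β → Bool)
    (hf : ∀ t, Computable (f t)) :
    ∃ F : Fin n × β → Bool, Computable F ∧ ∀ t v, F (t, v) = f t v := by
  suffices h : ∀ l : List (Fin n), ∃ F : Fin n × β → Bool, Computable F ∧
      ∀ t v, t ∈ l → F (t, v) = f t v by
    obtain ⟨F, hF, hFc⟩ := h (List.finRange n)
    exact ⟨F, hF, fun t v => hFc t v (List.mem_finRange t)⟩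
  intro l
  induction l with
  | nil => exact ⟨fun _ => false, Computable.const false, by simp⟩
  | cons t l ih =>
      obtain ⟨F, hF, hFc⟩ := ih
      refine ⟨fun p => bif decide (p.1 = t) then f t p.2 else F p, ?_, ?_⟩
      · exact Computable.cond
          ((Primrec.eq.comp Primrec.fst (Primrec.const t)).decide.to_comp)
          ((hf t).comp Computable.snd) hF
      · intro t' v ht'
        rcases List.mem_cons.1 ht' with rfl | hmem
        · simp
        · by_cases h : t' = t
          · subst h; simp
          · simpa [h] using hFc t' v hmem

theorem dirBA (π : FreeMonoid A →* G) (hπ : Function.Surjective π)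
    (Hs : Subgroup G) (πH : FreeMonoid B →* Hs)
    (hyp : ∀ (σ : Type) (_ : Fintype σ) (M : NFA A σ),
        ComputablePred (fun w : List A =>
          π (FreeMonoid.ofList w) ∈
            (fun u : List A => π (FreeMonoid.ofList u)) '' M.accepts)) :
    ∀ (σ : Type) (_ : Fintype σ) (M : NFA B σ),
        ComputablePred (fun w : List B =>
          πH (FreeMonoid.ofList w) ∈
            (fun u : List B => πH (FreeMonoid.ofList u)) '' M.accepts) := by
  intro σ instσ M
  letI := instσ
  choose dw hdw using fun b : B => hπ (πH (FreeMonoid.of b) : G)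
  set d : B → List A := fun b => FreeMonoid.toList (dw b) with hd
  have hdval : ∀ b : B, π (FreeMonoid.ofList (d b)) = (πH (FreeMonoid.of b) : G) := by
    intro b
    rw [hd]
    show π (FreeMonoid.ofList (FreeMonoid.toList (dw b))) = _
    rw [FreeMonoid.ofList_toList, hdw b]
  have hkey : ∀ u : List B,
      π (FreeMonoid.ofList (u.flatMap d)) = (πH (FreeMonoid.ofList u) : G) := by
    intro u
    induction u with
    | nil =>
        rw [show (List.flatMap d ([] : List B)) = [] from rfl,
          show FreeMonoid.ofList ([] : List A) = 1 from rfl,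
          show FreeMonoid.ofList ([] : List B) = 1 from rfl, map_one, map_one]
        rfl
    | cons b u ih =>
        rw [List.flatMap_cons, FreeMonoid.ofList_append, map_mul, ih, hdval b,
          show FreeMonoid.ofList (b :: u) = FreeMonoid.of b * FreeMonoid.ofList u from rfl,
          map_mul]
        rw [Subgroup.coe_mul]
  obtain ⟨τ, instτ, N, hN⟩ := exists_fin_nfa (substNFA M d)
  rw [substNFA_accepts] at hN
  obtain ⟨f, hf, hpf⟩ := ComputablePred.computable_iff.1 (hyp τ instτ N)
  have hflat : Computable (fun w : List B => w.flatMap d) := by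
    have : Primrec (fun w : List B => w.flatMap d) :=
      Primrec.list_flatMap Primrec.id ((Primrec.dom_finite d).comp Primrec.snd)
    exact this.to_comp
  rw [ComputablePred.computable_iff]
  refine ⟨fun w => f (w.flatMap d), hf.comp hflat, funext fun w => propext ?_⟩
  have h1 : (f (w.flatMap d) = true) ↔
      π (FreeMonoid.ofList (w.flatMap d)) ∈
        (fun u : List A => π (FreeMonoid.ofList u)) '' N.accepts := by
    rw [← iff_of_eq (congrFun hpf (w.flatMap d))]
  rw [h1]
  constructor
  · rintro ⟨v, hv, hπv⟩
    refine ⟨v.flatMap d, by rw [hN]; exact ⟨v, hv, rfl⟩, ?_⟩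
    show π (FreeMonoid.ofList (v.flatMap d)) = π (FreeMonoid.ofList (w.flatMap d))
    rw [hkey v, hkey w]
    exact congrArg _ hπv
  · rintro ⟨u, hu, hπu⟩
    rw [hN] at hu
    obtain ⟨v, hv, rfl⟩ := hu
    refine ⟨v, hv, ?_⟩
    show πH (FreeMonoid.ofList v) = πH (FreeMonoid.ofList w)
    have : π (FreeMonoid.ofList (v.flatMap d)) = π (FreeMonoid.ofList (w.flatMap d)) := hπu
    rw [hkey v, hkey w] at this
    exact Subtype.coe_injective this


theorem dirAB (π : FreeMonoid A →* G) (hπ : Function.Surjective π)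
    (Hs : Subgroup G) (hfi : Hs.FiniteIndex)
    (πH : FreeMonoid B →* Hs) (hπH : Function.Surjective πH)
    (hyp : ∀ (σ : Type) (_ : Fintype σ) (M : NFA B σ),
        ComputablePred (fun w : List B =>
          πH (FreeMonoid.ofList w) ∈
            (fun u : List B => πH (FreeMonoid.ofList u)) '' M.accepts)) :
    ∀ (σ : Type) (_ : Fintype σ) (M : NFA A σ),
        ComputablePred (fun w : List A =>
          π (FreeMonoid.ofList w) ∈
            (fun u : List A => π (FreeMonoid.ofList u)) '' M.accepts) := by
  classical
  intro σ instσ M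
  letI := instσ
  haveI := hfi
  haveI : Finite (Quotient (QuotientGroup.rightRel Hs)) :=
    Finite.of_equiv _ (QuotientGroup.quotientRightRelEquivQuotientLeftRel Hs).symm
  letI : Fintype (Quotient (QuotientGroup.rightRel Hs)) := Fintype.ofFinite _
  obtain ⟨n, q, hq, hqs⟩ : ∃ (n : ℕ) (q : G → Fin n),
      (∀ g g' : G, q g = q g' ↔ g' * g⁻¹ ∈ Hs) ∧ Function.Surjective q := by
    refine ⟨Fintype.card (Quotient (QuotientGroup.rightRel Hs)),
      fun g => (Fintype.equivFin _) (Quotient.mk (QuotientGroup.rightRel Hs) g), ?_, ?_⟩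
    · intro g g'
      rw [Equiv.apply_eq_iff_eq, Quotient.eq, QuotientGroup.rightRel_apply]
    · intro c
      obtain ⟨x, hx⟩ := Quotient.exists_rep ((Fintype.equivFin _).symm c)
      refine ⟨x, ?_⟩
      show (Fintype.equivFin (Quotient (QuotientGroup.rightRel Hs)))
        (Quotient.mk (QuotientGroup.rightRel Hs) x) = c
      rw [hx, Equiv.apply_symm_apply]
  obtain ⟨rep, hrep, hrep1⟩ : ∃ rep : Fin n → G, (∀ c, q (rep c) = c) ∧ rep (q 1) = 1 := by
    refine ⟨fun c => if c = q 1 then 1 else Function.surjInv hqs c, fun c => ?_, by simp⟩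
    by_cases h : c = q 1
    · simp [h]
    · simp [h, Function.surjInv_eq hqs]
  obtain ⟨act, hact⟩ : ∃ act : Fin n → A → Fin n,
      ∀ c a, act c a = q (rep c * π (FreeMonoid.of a)) := ⟨_, fun _ _ => rfl⟩
  have hmem : ∀ (c : Fin n) (a : A),
      rep c * π (FreeMonoid.of a) * (rep (act c a))⁻¹ ∈ Hs := by
    intro c a
    refine (hq (rep (act c a)) (rep c * π (FreeMonoid.of a))).1 ?_
    rw [hrep, hact]
  obtain ⟨d, hd⟩ : ∃ d : Fin n × A → List B, ∀ (c : Fin n) (a : A),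
      (↑(πH (FreeMonoid.ofList (d (c, a)))) : G)
        = rep c * π (FreeMonoid.of a) * (rep (act c a))⁻¹ := by
    choose f hf using fun p : Fin n × A => hπH ⟨_, hmem p.1 p.2⟩
    refine ⟨fun p => FreeMonoid.toList (f p), fun c a => ?_⟩
    rw [FreeMonoid.ofList_toList, hf (c, a)]
  have hcend : ∀ (u : List A) (c : Fin n),
      List.foldl act c u = q (rep c * π (FreeMonoid.ofList u)) := by
    intro u
    induction u with
    | nil =>
        intro c
        rw [show FreeMonoid.ofList ([] : List A) = 1 from rfl, map_one, mul_one,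
          List.foldl_nil, hrep]
    | cons a u ih =>
        intro c
        rw [List.foldl_cons, ih (act c a)]
        refine (hq _ _).2 ?_
        rw [show FreeMonoid.ofList (a :: u) = FreeMonoid.of a * FreeMonoid.ofList u from rfl,
          map_mul]
        have heq : rep c * (π (FreeMonoid.of a) * π (FreeMonoid.ofList u)) *
            (rep (act c a) * π (FreeMonoid.ofList u))⁻¹
            = rep c * π (FreeMonoid.of a) * (rep (act c a))⁻¹ := by group
        rw [heq]
        exact hmem c a
  have hINV : ∀ (u : List A) (c : Fin n),
      (↑(πH (FreeMonoid.ofList ((ann act c u).flatMap d))) : G) * rep (List.foldl act c u)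
        = rep c * π (FreeMonoid.ofList u) := by
    intro u
    induction u with
    | nil =>
        intro c
        rw [show ann act c ([] : List A) = [] from rfl]
        rw [show List.flatMap d ([] : List (Fin n × A)) = [] from rfl]
        rw [show FreeMonoid.ofList ([] : List B) = 1 from rfl, map_one]
        rw [show FreeMonoid.ofList ([] : List A) = 1 from rfl, map_one, mul_one,
          List.foldl_nil]
        rw [OneMemClass.coe_one, one_mul]
    | cons a u ih =>
        intro c
        rw [show ann act c (a :: u) = (c, a) :: ann act (act c a) u from rfl,
          List.flatMap_cons, FreeMonoid.ofList_append, map_mul, Subgroup.coe_mul,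
          List.foldl_cons, mul_assoc, ih (act c a), hd,
          show FreeMonoid.ofList (a :: u) = FreeMonoid.of a * FreeMonoid.ofList u from rfl,
          map_mul]
        group
  have hq1 : ∀ u : List A, List.foldl act (q 1) u = q (π (FreeMonoid.ofList u)) := by
    intro u; rw [hcend u (q 1), hrep1, one_mul]
  have hkeyv : ∀ u : List A,
      (↑(πH (FreeMonoid.ofList ((ann act (q 1) u).flatMap d))) : G)
        * rep (List.foldl act (q 1) u) = π (FreeMonoid.ofList u) := by
    intro u; rw [hINV u (q 1), hrep1, one_mul]
  have hper : ∀ t : Fin n, ∃ f : List B → Bool, Computable f ∧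
      ∀ v : List B, (f v = true) ↔ πH (FreeMonoid.ofList v) ∈
        (fun u : List B => πH (FreeMonoid.ofList u)) ''
          {v' | ∃ u ∈ M.accepts, List.foldl act (q 1) u = t ∧
            v' = (ann act (q 1) u).flatMap d} := by
    intro t
    obtain ⟨τ, instτ, N, hN⟩ := exists_fin_nfa (substNFA (annNFA act M (q 1) t) d)
    rw [substNFA_accepts, annNFA_accepts] at hN
    have hN' : N.accepts = {v' | ∃ u ∈ M.accepts,
        List.foldl act (q 1) u = t ∧ v' = (ann act (q 1) u).flatMap d} := by
      rw [hN]; ext v'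
      constructor
      · rintro ⟨w', ⟨u, hu, ht, rfl⟩, rfl⟩; exact ⟨u, hu, ht, rfl⟩
      · rintro ⟨u, hu, ht, rfl⟩; exact ⟨ann act (q 1) u, ⟨u, hu, ht, rfl⟩, rfl⟩
    obtain ⟨f, hf, hpf⟩ := ComputablePred.computable_iff.1 (hyp τ instτ N)
    refine ⟨f, hf, fun v => ?_⟩
    have h2 := iff_of_eq (congrFun hpf v)
    rw [hN'] at h2
    exact h2.symm
  choose f hfc hfspec using hper
  obtain ⟨F, hF, hFspec⟩ := computable_fin_cases f hfc
  have hWc : Computable (fun w : List A =>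
      w.foldl (fun p a => (act p.1 a, p.2 ++ d (p.1, a))) (q 1, ([] : List B))) := by
    have h1 : Primrec (fun x : ((Fin n × List B) × A) => act x.1.1 x.2) :=
      (Primrec.dom_finite (fun y : Fin n × A => act y.1 y.2)).comp
        (Primrec.pair (Primrec.fst.comp Primrec.fst) Primrec.snd)
    have h2 : Primrec (fun x : ((Fin n × List B) × A) => x.1.2 ++ d (x.1.1, x.2)) :=
      Primrec.list_append.comp (Primrec.snd.comp Primrec.fst)
        ((Primrec.dom_finite d).comp (Primrec.pair (Primrec.fst.comp Primrec.fst) Primrec.snd))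
    have hst : Primrec₂ (fun (_ : List A) (x : (Fin n × List B) × A) =>
        (act x.1.1 x.2, x.1.2 ++ d (x.1.1, x.2))) :=
      (Primrec.pair h1 h2).comp Primrec.snd
    exact (Primrec.list_foldl Primrec.id (Primrec.const (q 1, ([] : List B))) hst).to_comp
  have hWval : ∀ (u : List A) (c : Fin n) (v : List B),
      u.foldl (fun p a => (act p.1 a, p.2 ++ d (p.1, a))) (c, v)
        = (List.foldl act c u, v ++ (ann act c u).flatMap d) := by
    intro u
    induction u with
    | nil => intro c v; simp [ann]
    | cons a u ih =>
        intro c v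
        rw [List.foldl_cons, ih (act c a) (v ++ d (c, a)), List.foldl_cons]
        rw [show ann act c (a :: u) = (c, a) :: ann act (act c a) u from rfl, List.flatMap_cons,
          List.append_assoc]
  rw [ComputablePred.computable_iff]
  refine ⟨fun w => F (w.foldl (fun p a => (act p.1 a, p.2 ++ d (p.1, a))) (q 1, [])),
    hF.comp hWc, funext fun w => propext ?_⟩
  have hgoal : F (List.foldl (fun p a => (act p.1 a, p.2 ++ d (p.1, a))) (q 1, []) w) = true
      ↔ f (List.foldl act (q 1) w) ((ann act (q 1) w).flatMap d) = true := by
    rw [hWval w (q 1) [], List.nil_append, hFspec]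
  refine Iff.trans ?_ hgoal.symm
  constructor
  · rintro ⟨u, hu, hπu⟩
    have hπu' : π (FreeMonoid.ofList u) = π (FreeMonoid.ofList w) := hπu
    have hcend_eq : List.foldl act (q 1) u = List.foldl act (q 1) w := by
      rw [hq1 u, hq1 w, hπu']
    refine (hfspec _ _).2 ⟨(ann act (q 1) u).flatMap d, ⟨u, hu, hcend_eq, rfl⟩, ?_⟩
    show πH (FreeMonoid.ofList ((ann act (q 1) u).flatMap d))
        = πH (FreeMonoid.ofList ((ann act (q 1) w).flatMap d))
    apply Subtype.coe_injective
    have h1 := hkeyv u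
    have h2 := hkeyv w
    calc (↑(πH (FreeMonoid.ofList ((ann act (q 1) u).flatMap d))) : G)
        = π (FreeMonoid.ofList u) * (rep (List.foldl act (q 1) u))⁻¹ := by
          rw [← h1]; group
      _ = π (FreeMonoid.ofList w) * (rep (List.foldl act (q 1) w))⁻¹ := by
          rw [hπu', hcend_eq]
      _ = ↑(πH (FreeMonoid.ofList ((ann act (q 1) w).flatMap d))) := by
          rw [← h2]; group
  · intro hFtrue
    obtain ⟨v', ⟨u, hu, hcendu, rfl⟩, hπv⟩ := (hfspec _ _).1 hFtrue
    refine ⟨u, hu, ?_⟩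
    show π (FreeMonoid.ofList u) = π (FreeMonoid.ofList w)
    rw [← hkeyv u, ← hkeyv w, hcendu]
    have : πH (FreeMonoid.ofList ((ann act (q 1) u).flatMap d))
        = πH (FreeMonoid.ofList ((ann act (q 1) w).flatMap d)) := hπv
    rw [this]

end Main

end Stmt13Aux

/-- Decidability of rational subset membership is a virtual property: if `H` is a
finite-index subgroup of the finitely generated group `G` (with `π`, `πH` surjections
from free monoids on finite alphabets onto `G` resp. `H`), then membership in every
rational subset of `G` is decidable iff membership in every rational subset of `H` is
decidable. -/
theorem stmt_13 {G : Type*} [Group G] {A B : Type*}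
    [Fintype A] [Primcodable A] [Fintype B] [Primcodable B]
    (π : FreeMonoid A →* G) (hπ : Function.Surjective π)
    (Hs : Subgroup G) (hfi : Hs.FiniteIndex)
    (πH : FreeMonoid B →* Hs) (hπH : Function.Surjective πH) :
    ((∀ (σ : Type) (_ : Fintype σ) (M : NFA A σ),
        ComputablePred (fun w : List A =>
          π (FreeMonoid.ofList w) ∈
            (fun u : List A => π (FreeMonoid.ofList u)) '' M.accepts)) ↔
      (∀ (σ : Type) (_ : Fintype σ) (M : NFA B σ),
        ComputablePred (fun w : List B =>
          πH (FreeMonoid.ofList w) ∈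
            (fun u : List B => πH (FreeMonoid.ofList u)) '' M.accepts))) := by
  exact ⟨fun h => Stmt13Aux.dirBA π hπ Hs πH h,
    fun h => Stmt13Aux.dirAB π hπ Hs hfi πH hπH h⟩
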